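/- Let $r, k, a, n$ be positive integers with $r > k \ge 1$, $a \ge 2$ and $n \ge 4r\binom{r}{k}^2 a$. Then $\binom{n-(a-1)k}{r-k} \ge (a-1)\binom{r}{k}^2\binom{n-k-1}{r-k-1}$. -/

import Mathlib

/-- Bernoulli-type bound in ℕ: `y^(m+1) - x^(m+1) ≤ (m+1)(y-x)y^m`. -/
lemma bern_aux (x y : ℕ) (hxy : x ≤ y) :
    ∀ m : ℕ, y ^ (m + 1) ≤ x ^ (m + 1) + (m + 1) * (y - x) * y ^ m := by
  intro m
  induction m with
  | zero => simp only [zero_add, pow_one, pow_zero, mul_one, one_mul]; omega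
  | succ m ih =>
    calc y ^ (m + 2) = y * y ^ (m + 1) := by ring
      _ ≤ y * (x ^ (m + 1) + (m + 1) * (y - x) * y ^ m) := Nat.mul_le_mul_left _ ih
      _ = y * x ^ (m + 1) + (m + 1) * (y - x) * y ^ (m + 1) := by ring
      _ = (x + (y - x)) * x ^ (m + 1) + (m + 1) * (y - x) * y ^ (m + 1) := by
          rw [Nat.add_sub_cancel' hxy]
      _ = x ^ (m + 2) + ((y - x) * x ^ (m + 1) + (m + 1) * (y - x) * y ^ (m + 1)) := by ring
      _ ≤ x ^ (m + 2) + ((y - x) * y ^ (m + 1) + (m + 1) * (y - x) * y ^ (m + 1)) := by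
          gcongr
      _ = x ^ (m + 2) + (m + 2) * (y - x) * y ^ (m + 1) := by ring

/-- For `r > k ≥ 1`, `a ≥ 2` and `n ≥ 4r·C(r,k)²·a`,
`C(n-(a-1)k, r-k) ≥ (a-1)·C(r,k)²·C(n-k-1, r-k-1)`. -/
theorem stmt_9 (n r k a : ℕ) (hk : 1 ≤ k) (hkr : k < r) (ha : 2 ≤ a)
    (hn : 4 * r * (r.choose k) ^ 2 * a ≤ n) :
    (a - 1) * (r.choose k) ^ 2 * ((n - k - 1).choose (r - k - 1)) ≤
      (n - (a - 1) * k).choose (r - k) := by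
  have hrpos : 0 < r := by omega
  -- `C(r,k) ≥ r`
  have hrk : r ≤ r.choose k := by
    have h1 : (k : ℕ).choose (k - 1) ≤ r.choose (k - 1) := Nat.choose_le_choose _ (by omega)
    have h2 : (k : ℕ).choose (k - 1) = k := by
      rw [Nat.choose_symm (by omega)]
      simp [Nat.sub_sub_self hk]
    have h3 : k * r.choose k = r * (r - 1).choose (k - 1) := by
      have h := Nat.add_one_mul_choose_eq (r - 1) (k - 1)
      rw [show r - 1 + 1 = r by omega, show k - 1 + 1 = k by omega] at h
      rw [Nat.mul_comm k]
      exact h.symm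
    have h4 : k ≤ (r - 1).choose (k - 1) := by
      calc k = (k : ℕ).choose (k - 1) := h2.symm
        _ ≤ (r - 1).choose (k - 1) := Nat.choose_le_choose _ (by omega)
    nlinarith [Nat.choose_pos (le_of_lt hkr)]
  -- generalize the binomial square and `r - k` to opaque variables
  obtain ⟨C, hCdef⟩ : ∃ C, (r.choose k) ^ 2 = C := ⟨_, rfl⟩
  obtain ⟨m, hmdef⟩ : ∃ m, r - k = m := ⟨_, rfl⟩
  obtain ⟨N, hNdef⟩ : ∃ N, n - (a - 1) * k = N := ⟨_, rfl⟩
  rw [hCdef] at hn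
  rw [hmdef, hCdef, hNdef]
  have hm1 : 1 ≤ m := by omega
  have hmr : m ≤ r := by omega
  have hC2 : r ^ 2 ≤ C := by rw [← hCdef]; exact Nat.pow_le_pow_left hrk 2
  have hrC : r ≤ C := le_trans (Nat.le_self_pow two_ne_zero r) hC2
  have hCpos : 0 < C := by omega
  have hn2 : 2 * (a * r * C) ≤ n := by nlinarith
  have har : a * r ≤ n := by nlinarith
  -- reduce to descending factorials
  apply Nat.le_of_mul_le_mul_right _ (Nat.factorial_pos m)
  have hub : (a - 1) * C * (n - k - 1).choose (m - 1) * m.factorial ≤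
      (a - 1) * C * m * n ^ (m - 1) := by
    have hfac : m.factorial = m * (m - 1).factorial := by
      conv_lhs => rw [show m = (m - 1) + 1 by omega]
      rw [Nat.factorial_succ]
      congr 1
      omega
    have h5 : (n - k - 1).choose (m - 1) * (m - 1).factorial ≤ n ^ (m - 1) := by
      calc (n - k - 1).choose (m - 1) * (m - 1).factorial
          = (n - k - 1).descFactorial (m - 1) := by
            rw [Nat.descFactorial_eq_factorial_mul_choose]; ring
        _ ≤ (n - k - 1) ^ (m - 1) := Nat.descFactorial_le_pow _ _
        _ ≤ n ^ (m - 1) := Nat.pow_le_pow_left (by omega) _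
    rw [hfac]
    calc (a - 1) * C * (n - k - 1).choose (m - 1) * (m * (m - 1).factorial)
        = (a - 1) * C * m * ((n - k - 1).choose (m - 1) * (m - 1).factorial) := by ring
      _ ≤ (a - 1) * C * m * n ^ (m - 1) := Nat.mul_le_mul_left _ h5
  have hlb : (N + 1 - m) ^ m ≤ N.choose m * m.factorial := by
    calc (N + 1 - m) ^ m ≤ N.descFactorial m := Nat.pow_sub_le_descFactorial N m
      _ = N.choose m * m.factorial := by
          rw [Nat.descFactorial_eq_factorial_mul_choose]; ring
  refine hub.trans (le_trans ?_ hlb)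
  -- `(a-1)·k + m ≤ a·r`
  have hpq : (a - 1) * k + m ≤ a * r := by
    have h1 : (a - 1) * k ≤ (a - 1) * r := Nat.mul_le_mul_left _ (le_of_lt hkr)
    have h2 : (a - 1) * r + r = a * r := by
      have : a - 1 + 1 = a := by omega
      calc (a - 1) * r + r = (a - 1 + 1) * r := by ring
        _ = a * r := by rw [this]
    omega
  have hNm : n - a * r ≤ N + 1 - m := by
    obtain ⟨p, hp⟩ : ∃ p, (a - 1) * k = p := ⟨_, rfl⟩
    obtain ⟨q, hq⟩ : ∃ q, a * r = q := ⟨_, rfl⟩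
    rw [hp] at hNdef
    rw [hp, hq] at hpq
    rw [hq] at har ⊢
    omega
  calc (a - 1) * C * m * n ^ (m - 1)
      ≤ (n - a * r) ^ m := by
        have hb := bern_aux (n - a * r) n (Nat.sub_le _ _) (m - 1)
        rw [show m - 1 + 1 = m by omega, Nat.sub_sub_self har] at hb
        have hnm : n ^ m = n * n ^ (m - 1) := by
          conv_lhs => rw [show m = (m - 1) + 1 by omega]
          ring
        have hsum : (a - 1) * C * m + m * (a * r) ≤ n := by
          have h6 : (a - 1) * C * m ≤ a * r * C := by
            calc (a - 1) * C * m ≤ a * C * r :=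
                Nat.mul_le_mul (Nat.mul_le_mul (by omega) le_rfl) hmr
              _ = a * r * C := by ring
          have h7 : m * (a * r) ≤ a * r * C := by
            calc m * (a * r) ≤ C * (a * r) := Nat.mul_le_mul_right _ (le_trans hmr hrC)
              _ = a * r * C := by ring
          omega
        have key : (a - 1) * C * m * n ^ (m - 1) + m * (a * r) * n ^ (m - 1) ≤
            (n - a * r) ^ m + m * (a * r) * n ^ (m - 1) := by
          calc (a - 1) * C * m * n ^ (m - 1) + m * (a * r) * n ^ (m - 1)
              = ((a - 1) * C * m + m * (a * r)) * n ^ (m - 1) := by ring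
            _ ≤ n * n ^ (m - 1) := Nat.mul_le_mul_right _ hsum
            _ = n ^ m := hnm.symm
            _ ≤ (n - a * r) ^ m + m * (a * r) * n ^ (m - 1) := hb
        exact Nat.le_of_add_le_add_right key
    _ ≤ (N + 1 - m) ^ m := Nat.pow_le_pow_left hNm m
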